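/- Let ξ* = 4√(2 + 4√3)/9 and η* = (5 + 2√3)/9, and consider the cubic Bézier curve p₃(t) = Σ_{j=0}^{3} B_j³(t) b_j with control points b₀ = (0, -1), b₁ = (ξ*, -η*), b₂ = (ξ*, η*), b₃ = (0, 1). Then ‖p₃(2-√3)‖² = 1 and ‖p₃(√3-1)‖² = 1, and ξ* > 1, η* > 0; that is, (ξ*, η*) is the unique admissible solution of the cubic G⁰ approximation problem for the half circle (φ = π/2). -/

import Mathlib

open Real

set_option maxHeartbeats 1600000

/-- For the half circle (`φ = π/2`), the pair `ξ* = 4√(2+4√3)/9`, `η* = (5+2√3)/9` is the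
unique admissible solution of the cubic `G⁰` approximation problem: the cubic Bézier
curve with control points `(0,-1)`, `(ξ*,-η*)`, `(ξ*,η*)`, `(0,1)` satisfies
`‖p₃(2-√3)‖² = 1` and `‖p₃(√3-1)‖² = 1`, with `ξ* > 1`, `η* > 0`, and it is the only
pair with these properties. -/
theorem cubic_G0_half_circle_solution
    (ξ η : ℝ) (hξ : ξ = 4 * Real.sqrt (2 + 4 * Real.sqrt 3) / 9)
    (hη : η = (5 + 2 * Real.sqrt 3) / 9)
    (p₃ : ℝ × ℝ → ℝ → EuclideanSpace ℝ (Fin 2))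
    (hp₃ : ∀ z : ℝ × ℝ, ∀ t : ℝ, p₃ z t =
      ((1 - t) / 2) ^ 3 • (!₂[0, -1] : EuclideanSpace ℝ (Fin 2)) +
      (3 * ((1 + t) / 2) * ((1 - t) / 2) ^ 2) • (!₂[z.1, -z.2] : EuclideanSpace ℝ (Fin 2)) +
      (3 * ((1 + t) / 2) ^ 2 * ((1 - t) / 2)) • (!₂[z.1, z.2] : EuclideanSpace ℝ (Fin 2)) +
      ((1 + t) / 2) ^ 3 • (!₂[0, 1] : EuclideanSpace ℝ (Fin 2))) :
    (‖p₃ (ξ, η) (2 - Real.sqrt 3)‖ ^ 2 = 1 ∧ ‖p₃ (ξ, η) (Real.sqrt 3 - 1)‖ ^ 2 = 1 ∧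
      1 < ξ ∧ 0 < η) ∧
    ∀ z : ℝ × ℝ, 1 < z.1 → 0 < z.2 →
      ‖p₃ z (2 - Real.sqrt 3)‖ ^ 2 = 1 → ‖p₃ z (Real.sqrt 3 - 1)‖ ^ 2 = 1 →
      z = (ξ, η) := by
  have key : ∀ z : ℝ × ℝ, ∀ t : ℝ, ‖p₃ z t‖ ^ 2 =
      (3 * ((1 + t) / 2) * ((1 - t) / 2) ^ 2 * z.1 +
        3 * ((1 + t) / 2) ^ 2 * ((1 - t) / 2) * z.1) ^ 2 +
      (((1 - t) / 2) ^ 3 * (-1) + 3 * ((1 + t) / 2) * ((1 - t) / 2) ^ 2 * (-z.2) +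
        3 * ((1 + t) / 2) ^ 2 * ((1 - t) / 2) * z.2 + ((1 + t) / 2) ^ 3) ^ 2 := by
    intro z t
    have h0 : p₃ z t 0 = ((1 - t) / 2) ^ 3 * 0 + (3 * ((1 + t) / 2) * ((1 - t) / 2) ^ 2) * z.1 +
        (3 * ((1 + t) / 2) ^ 2 * ((1 - t) / 2)) * z.1 + ((1 + t) / 2) ^ 3 * 0 := by
      rw [hp₃]; rfl
    have h1 : p₃ z t 1 = ((1 - t) / 2) ^ 3 * (-1) +
        (3 * ((1 + t) / 2) * ((1 - t) / 2) ^ 2) * (-z.2) +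
        (3 * ((1 + t) / 2) ^ 2 * ((1 - t) / 2)) * z.2 + ((1 + t) / 2) ^ 3 * 1 := by
      rw [hp₃]; rfl
    rw [EuclideanSpace.norm_eq, Real.sq_sqrt (by positivity)]
    simp only [Fin.sum_univ_two, Real.norm_eq_abs, sq_abs]
    rw [h0, h1]; ring
  set s : ℝ := Real.sqrt 3 with hsdef
  have hs0 : 0 ≤ s := Real.sqrt_nonneg 3
  have hs : s ^ 2 = 3 := Real.sq_sqrt (by norm_num)
  set r : ℝ := Real.sqrt (2 + 4 * s) with hrdef
  have hr0 : 0 ≤ r := Real.sqrt_nonneg _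
  have hr : r ^ 2 = 2 + 4 * s := Real.sq_sqrt (by linarith)
  subst hξ hη
  -- basic bounds on s
  have hs1 : 1 < s := by nlinarith
  have hsu : s < 7 / 4 := by nlinarith
  constructor
  · refine ⟨?_, ?_, ?_, by positivity⟩
    · rw [key]
      simp only
      linear_combination (-56/9 + 25/9*r^2 - 79/9*s - 8/9*s*r^2 + 161/36*s^2 + 1/9*s^2*r^2
          - 41/18*s^3 + 19/18*s^4 - 5/18*s^5 + 1/36*s^6) * hs + (28/3 - 16/3*s) * hr
    · rw [key]
      simp only
      linear_combination (-14/9 + 7/9*r^2 - 16/9*s - 4/9*s*r^2 + 11/9*s^2 + 1/9*s^2*r^2 - 4/9*s^3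
          + 5/36*s^4 - 1/9*s^5 + 1/36*s^6) * hs + (7/3 - 4/3*s) * hr
    · -- 1 < 4r/9
      have : 9 / 4 < r := by nlinarith
      linarith
  · intro z hz1 hz2 he1 he2
    rw [key] at he1 he2
    set a : ℝ := z.1 with hadef
    set b : ℝ := z.2 with hbdef
    -- quadratic for b
    have hQ : (405 - 234*s) * b^2 + (148*s - 258) * b + (33 - 18*s) = 0 := by
      linear_combination (4/3 : ℝ) * he1 - (16/3 : ℝ) * he2 +
        (-6 + 72*b - 126*b^2 + 9/4*a^2 - 1/3*s - 14*s*b + 45*s*b^2 - 6*s*a^2 + 9/4*s^2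
          - 15/2*s^2*b + 9/4*s^2*b^2 + 9/4*s^2*a^2 - s^3 + 6*s^3*b - 9*s^3*b^2 + 1/4*s^4
          - 3/2*s^4*b + 9/4*s^4*b^2) * hs
    have hQη : (405 - 234*s) * ((5 + 2*s)/9)^2 + (148*s - 258) * ((5 + 2*s)/9) + (33 - 18*s)
        = 0 := by
      linear_combination (-44/9 - 104/9*s) * hs
    have hfac : (b - (5 + 2*s)/9) * ((405 - 234*s) * (b + (5 + 2*s)/9) + (148*s - 258)) = 0 := by
      linear_combination hQ - hQη
    have hA : 405 - 234*s < 0 := by nlinarith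
    have hB : 148*s - 258 < 0 := by nlinarith
    have hbe : 0 < b + (5 + 2*s)/9 := by positivity
    have hb : b = (5 + 2*s)/9 := by
      rcases mul_eq_zero.1 hfac with h | h
      · linarith
      · nlinarith [mul_neg_of_neg_of_pos hA hbe]
    rw [hb] at he2
    have hK : (3*(2*s - 3)/4)^2 * (a^2 - (4*r/9)^2) = 0 := by
      linear_combination he2 + (14/9 - 27/16*a^2 - 4/9*r^2 + 16/9*s + 9/4*s*a^2 - 11/9*s^2
        - 9/16*s^2*a^2 + 4/9*s^3 - 5/36*s^4 + 1/9*s^5 - 1/36*s^6) * hs + (-7/3 + 4/3*s) * hr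
    have hKne : (3*(2*s - 3)/4)^2 ≠ 0 := by
      have h23 : 2*s - 3 ≠ 0 := by intro h; nlinarith
      positivity
    have ha2 : a^2 - (4*r/9)^2 = 0 := by
      rcases mul_eq_zero.1 hK with h | h
      · exact absurd h hKne
      · exact h
    have ha : a = 4*r/9 := by
      rcases mul_eq_zero.1 (show (a - 4*r/9) * (a + 4*r/9) = 0 by linear_combination ha2) with h | h
      · linarith
      · nlinarith
    have : z = (z.1, z.2) := rfl
    rw [this, ← hadef, ← hbdef, ha, hb]
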